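/- (SA-Regret implies m-shift regret) Let T ≥ 2 and m ≥ 0 be integers, c ≥ 0 a real number, W a nonempty set, and let ℓ_t ∈ ℝ and f_t : W → ℝ for t = 1,...,T. Suppose that for every interval [a..b] ⊆ [1..T] and every w ∈ W, ∑_{t=a}^{b} (ℓ_t − f_t(w)) ≤ c·sqrt((b − a + 1)·ln b). Then for every sequence w_1, ..., w_T in W with at most m switches (i.e., ∑_{j=1}^{T−1} 1{w_j ≠ w_{j+1}} ≤ m), it holds that ∑_{t=1}^{T} (ℓ_t − f_t(w_t)) ≤ c·sqrt((m+1)·T·ln T). -/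

import Mathlib

open Finset

private lemma sqrt_combine {x y K : ℝ} (hx : 0 ≤ x) (hy : 0 ≤ y) (hK : 0 ≤ K) :
    Real.sqrt x + Real.sqrt (K * y) ≤ Real.sqrt ((K + 1) * (x + y)) := by
  have hs : Real.sqrt x * Real.sqrt (K * y) = Real.sqrt (K * x) * Real.sqrt y := by
    rw [← Real.sqrt_mul hx, ← Real.sqrt_mul (mul_nonneg hK hx)]; ring_nf
  have key : (Real.sqrt x + Real.sqrt (K * y)) ^ 2 ≤ (K + 1) * (x + y) := by
    nlinarith [Real.sq_sqrt hx, Real.sq_sqrt (mul_nonneg hK hy),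
      Real.sq_sqrt (mul_nonneg hK hx), Real.sq_sqrt hy,
      two_mul_le_add_sq (Real.sqrt (K * x)) (Real.sqrt y), hs]
  calc Real.sqrt x + Real.sqrt (K * y)
      = Real.sqrt ((Real.sqrt x + Real.sqrt (K * y)) ^ 2) :=
        (Real.sqrt_sq (by positivity)).symm
    _ ≤ Real.sqrt ((K + 1) * (x + y)) := Real.sqrt_le_sqrt key

private lemma const_on {W : Type*} (w : ℕ → W) (a b : ℕ)
    (h : ∀ i, a ≤ i → i < b → w i = w (i + 1)) :
    ∀ t, a ≤ t → t ≤ b → w t = w a := by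
  intro t ht
  induction t, ht using Nat.le_induction with
  | base => intro _; rfl
  | succ n hn ih =>
    intro hnb
    rw [← h n hn (by omega)]
    exact ih (by omega)

private lemma aux_block
    (T : ℕ) (hT : 2 ≤ T) (c : ℝ) (hc : 0 ≤ c)
    (W : Type*) [Nonempty W]
    (ℓ : ℕ → ℝ) (f : ℕ → W → ℝ)
    (hSA : ∀ a b : ℕ, 1 ≤ a → a ≤ b → b ≤ T → ∀ w : W,
      ∑ t ∈ Finset.Icc a b, (ℓ t - f t w)
        ≤ c * Real.sqrt (((b - a + 1 : ℕ) : ℝ) * Real.log (b : ℝ)))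
    (w : ℕ → W) :
    ∀ k a : ℕ, 1 ≤ a → a ≤ T →
      {j : ℕ | a ≤ j ∧ j ≤ T - 1 ∧ w j ≠ w (j + 1)}.ncard ≤ k →
      ∑ t ∈ Finset.Icc a T, (ℓ t - f t (w t))
        ≤ c * Real.sqrt (((k : ℝ) + 1) * ((T - a + 1 : ℕ) : ℝ) * Real.log (T : ℝ)) := by
  have hlogT : 0 ≤ Real.log (T : ℝ) := Real.log_nonneg (by exact_mod_cast Nat.one_le_of_lt hT)
  intro k
  induction k with
  | zero =>
    intro a ha haT hcard
    -- no switches in [a, T-1]: w is constant on [a, T]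
    have hfin : {j : ℕ | a ≤ j ∧ j ≤ T - 1 ∧ w j ≠ w (j + 1)}.Finite :=
      Set.Finite.subset (Set.finite_Icc a (T - 1)) (fun j hj => ⟨hj.1, hj.2.1⟩)
    have hempty : {j : ℕ | a ≤ j ∧ j ≤ T - 1 ∧ w j ≠ w (j + 1)} = ∅ := by
      by_contra hne
      have hnonempty := Set.nonempty_iff_ne_empty.mpr hne
      have := (Set.ncard_pos hfin).mpr hnonempty
      omega
    have hconst : ∀ t, a ≤ t → t ≤ T → w t = w a := by
      apply const_on
      intro i hi hib
      by_contra hne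
      have : i ∈ ({j : ℕ | a ≤ j ∧ j ≤ T - 1 ∧ w j ≠ w (j + 1)} : Set ℕ) :=
        ⟨hi, by omega, hne⟩
      rw [hempty] at this
      exact this
    have hsum : ∑ t ∈ Finset.Icc a T, (ℓ t - f t (w t))
        = ∑ t ∈ Finset.Icc a T, (ℓ t - f t (w a)) := by
      apply Finset.sum_congr rfl
      intro t ht
      rw [Finset.mem_Icc] at ht
      rw [hconst t ht.1 ht.2]
    rw [hsum]
    simp only [Nat.cast_zero, zero_add, one_mul]
    exact hSA a T ha haT le_rfl (w a)
  | succ k ih =>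
    intro a ha haT hcard
    have hfin : {j : ℕ | a ≤ j ∧ j ≤ T - 1 ∧ w j ≠ w (j + 1)}.Finite :=
      Set.Finite.subset (Set.finite_Icc a (T - 1)) (fun j hj => ⟨hj.1, hj.2.1⟩)
    by_cases hemp : {j : ℕ | a ≤ j ∧ j ≤ T - 1 ∧ w j ≠ w (j + 1)} = ∅
    · refine (ih a ha haT (by rw [hemp]; simp)).trans ?_
      apply mul_le_mul_of_nonneg_left _ hc
      apply Real.sqrt_le_sqrt
      have h1 : (0 : ℝ) ≤ ((T - a + 1 : ℕ) : ℝ) := Nat.cast_nonneg _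
      push_cast
      nlinarith [(Nat.cast_nonneg k : (0:ℝ) ≤ (k : ℝ))]
    · have hne : ∃ j, j ∈ {j : ℕ | a ≤ j ∧ j ≤ T - 1 ∧ w j ≠ w (j + 1)} :=
        Set.nonempty_iff_ne_empty.mpr hemp
      classical
      obtain ⟨j, hjS, hjmin⟩ :
          ∃ j ∈ {j : ℕ | a ≤ j ∧ j ≤ T - 1 ∧ w j ≠ w (j + 1)},
            ∀ i < j, i ∉ {j : ℕ | a ≤ j ∧ j ≤ T - 1 ∧ w j ≠ w (j + 1)} :=
        ⟨Nat.find hne, Nat.find_spec hne, fun i hi => Nat.find_min hne hi⟩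
      obtain ⟨haj, hjT1, hjsw⟩ := hjS
      have hjltT : j < T := by omega
      -- w constant on [a, j]
      have hconst : ∀ t, a ≤ t → t ≤ j → w t = w a := by
        apply const_on
        intro i hi hij
        by_contra hne'
        exact hjmin i hij ⟨hi, by omega, hne'⟩
      -- split the sum
      have hsplit : ∑ t ∈ Finset.Icc a T, (ℓ t - f t (w t))
          = ∑ t ∈ Finset.Icc a j, (ℓ t - f t (w t))
            + ∑ t ∈ Finset.Icc (j + 1) T, (ℓ t - f t (w t)) := by
        have h1 : Finset.Icc a T = Finset.Ioc (a - 1) T := by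
          rw [← Finset.Icc_add_one_left_eq_Ioc]; congr 1; omega
        have h2 : Finset.Icc a j = Finset.Ioc (a - 1) j := by
          rw [← Finset.Icc_add_one_left_eq_Ioc]; congr 1; omega
        have h3 : Finset.Icc (j + 1) T = Finset.Ioc j T := by
          rw [← Finset.Icc_add_one_left_eq_Ioc]
        rw [h1, h2, h3]
        exact (Finset.sum_Ioc_consecutive _ (by omega) (by omega)).symm
      -- first block
      have hsum1 : ∑ t ∈ Finset.Icc a j, (ℓ t - f t (w t))
          = ∑ t ∈ Finset.Icc a j, (ℓ t - f t (w a)) := by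
        apply Finset.sum_congr rfl
        intro t ht
        rw [Finset.mem_Icc] at ht
        rw [hconst t ht.1 ht.2]
      have hb1 : ∑ t ∈ Finset.Icc a j, (ℓ t - f t (w t))
          ≤ c * Real.sqrt (((j - a + 1 : ℕ) : ℝ) * Real.log (T : ℝ)) := by
        rw [hsum1]
        refine (hSA a j ha haj (by omega) (w a)).trans ?_
        apply mul_le_mul_of_nonneg_left _ hc
        apply Real.sqrt_le_sqrt
        apply mul_le_mul_of_nonneg_left _ (Nat.cast_nonneg _)
        apply Real.log_le_log (by exact_mod_cast (show 0 < j by omega))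
        exact_mod_cast hjltT.le
      -- second block by IH
      have hcard2 : {i : ℕ | j + 1 ≤ i ∧ i ≤ T - 1 ∧ w i ≠ w (i + 1)}.ncard ≤ k := by
        have hsub : {i : ℕ | j + 1 ≤ i ∧ i ≤ T - 1 ∧ w i ≠ w (i + 1)}
            ⊆ {j : ℕ | a ≤ j ∧ j ≤ T - 1 ∧ w j ≠ w (j + 1)} \ {j} := by
          intro i hi
          obtain ⟨h1, h2, h3⟩ := hi
          refine ⟨⟨by omega, h2, h3⟩, ?_⟩
          simp only [Set.mem_singleton_iff]
          omega
        have h1 : ({i : ℕ | j + 1 ≤ i ∧ i ≤ T - 1 ∧ w i ≠ w (i + 1)}).ncard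
            ≤ ({j : ℕ | a ≤ j ∧ j ≤ T - 1 ∧ w j ≠ w (j + 1)} \ {j}).ncard :=
          Set.ncard_le_ncard hsub hfin.diff
        have h2 : ({j : ℕ | a ≤ j ∧ j ≤ T - 1 ∧ w j ≠ w (j + 1)} \ {j}).ncard
            < ({j : ℕ | a ≤ j ∧ j ≤ T - 1 ∧ w j ≠ w (j + 1)}).ncard :=
          Set.ncard_diff_singleton_lt_of_mem ⟨haj, hjT1, hjsw⟩ hfin
        omega
      have hb2 : ∑ t ∈ Finset.Icc (j + 1) T, (ℓ t - f t (w t))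
          ≤ c * Real.sqrt (((k : ℝ) + 1) * ((T - (j + 1) + 1 : ℕ) : ℝ) * Real.log (T : ℝ)) :=
        ih (j + 1) (by omega) (by omega) hcard2
      -- combine
      rw [hsplit]
      have hTj : ((T - (j + 1) + 1 : ℕ) : ℝ) = ((T - j : ℕ) : ℝ) := by
        congr 1; omega
      rw [hTj] at hb2
      calc ∑ t ∈ Finset.Icc a j, (ℓ t - f t (w t))
            + ∑ t ∈ Finset.Icc (j + 1) T, (ℓ t - f t (w t))
          ≤ c * Real.sqrt (((j - a + 1 : ℕ) : ℝ) * Real.log (T : ℝ))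
            + c * Real.sqrt (((k : ℝ) + 1) * ((T - j : ℕ) : ℝ) * Real.log (T : ℝ)) :=
            add_le_add hb1 hb2
        _ = c * (Real.sqrt (((j - a + 1 : ℕ) : ℝ) * Real.log (T : ℝ))
            + Real.sqrt (((k : ℝ) + 1) * (((T - j : ℕ) : ℝ) * Real.log (T : ℝ)))) := by
            rw [mul_add, mul_assoc]
        _ ≤ c * Real.sqrt ((((k : ℝ) + 1) + 1)
              * (((j - a + 1 : ℕ) : ℝ) * Real.log (T : ℝ)
                + ((T - j : ℕ) : ℝ) * Real.log (T : ℝ))) := by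
            apply mul_le_mul_of_nonneg_left _ hc
            exact sqrt_combine (by positivity) (by positivity) (by positivity)
        _ = c * Real.sqrt ((((k + 1 : ℕ) : ℝ) + 1) * ((T - a + 1 : ℕ) : ℝ)
              * Real.log (T : ℝ)) := by
            congr 1
            have hsum : ((j - a + 1 : ℕ) : ℝ) + ((T - j : ℕ) : ℝ)
                = ((T - a + 1 : ℕ) : ℝ) := by
              have h : (j - a + 1) + (T - j) = T - a + 1 := by omega
              exact_mod_cast congrArg (Nat.cast : ℕ → ℝ) h
            rw [← hsum]
            push_cast
            ring_nf

theorem sa_regret_implies_m_shift_regret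
    (T m : ℕ) (hT : 2 ≤ T) (c : ℝ) (hc : 0 ≤ c)
    (W : Type*) [Nonempty W]
    (ℓ : ℕ → ℝ) (f : ℕ → W → ℝ)
    (hSA : ∀ a b : ℕ, 1 ≤ a → a ≤ b → b ≤ T → ∀ w : W,
      ∑ t ∈ Finset.Icc a b, (ℓ t - f t w)
        ≤ c * Real.sqrt (((b - a + 1 : ℕ) : ℝ) * Real.log (b : ℝ))) :
    ∀ w : ℕ → W, {j : ℕ | 1 ≤ j ∧ j ≤ T - 1 ∧ w j ≠ w (j + 1)}.ncard ≤ m →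
      ∑ t ∈ Finset.Icc 1 T, (ℓ t - f t (w t))
        ≤ c * Real.sqrt (((m : ℝ) + 1) * (T : ℝ) * Real.log (T : ℝ)) := by
  intro w hw
  have := aux_block T hT c hc W ℓ f hSA w m 1 le_rfl (by omega) hw
  have hT1 : ((T - 1 + 1 : ℕ) : ℝ) = (T : ℝ) := by
    have h : T - 1 + 1 = T := by omega
    exact_mod_cast congrArg (Nat.cast : ℕ → ℝ) h
  rwa [hT1] at this
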